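/- The branch locus of the map f̃₄ : ℂ² → ℂ² given by f̃₄(s,t) = (s⁴ + (4ξ − 2)s²t² + t⁴, s⁵t − st⁵), with ξ = exp(2πi/6), is the cuspidal cubic curve of equation x³ + (−24ξ + 12)y² = 0; that is, eliminating s, t from the ideal generated by the Jacobian of f̃₄ and x − (s⁴ + (4ξ−2)s²t² + t⁴), y − (s⁵t − st⁵) yields the principal ideal (x³ + (−24ξ + 12)y²). -/

import Mathlib

open MvPolynomial

/-- `ξ = exp(2πi/6)`. -/
noncomputable def xi : ℂ := Complex.exp (2 * Real.pi * Complex.I / 6)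

/-- First component `X(s,t) = s⁴ + (4ξ−2)s²t² + t⁴` in `ℂ[s,t,x,y]`
(variables `0,1,2,3` are `s,t,x,y`). -/
noncomputable def Xst : MvPolynomial (Fin 4) ℂ :=
  X 0 ^ 4 + C (4 * xi - 2) * X 0 ^ 2 * X 1 ^ 2 + X 1 ^ 4

/-- Second component `Y(s,t) = s⁵t − st⁵`. -/
noncomputable def Yst : MvPolynomial (Fin 4) ℂ := X 0 ^ 5 * X 1 - X 0 * X 1 ^ 5

/-- The Jacobian determinant of `(X(s,t), Y(s,t))` with respect to `s, t`. -/
noncomputable def Jst : MvPolynomial (Fin 4) ℂ :=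
  pderiv 0 Xst * pderiv 1 Yst - pderiv 1 Xst * pderiv 0 Yst

/-- The map `f̃₄(s,t) = (s⁴ + (4ξ−2)s²t² + t⁴, s⁵t − st⁵)`. -/
noncomputable def f4map (p : ℂ × ℂ) : ℂ × ℂ :=
  (p.1 ^ 4 + (4 * xi - 2) * p.1 ^ 2 * p.2 ^ 2 + p.2 ^ 4,
   p.1 ^ 5 * p.2 - p.1 * p.2 ^ 5)

noncomputable def s3 : ℂ := Real.sqrt 3

lemma hs3 : s3 ^ 2 = 3 := by
  unfold s3
  norm_cast
  rw [Real.sq_sqrt] <;> norm_num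

lemma xi_eq : xi = 1/2 + s3/2 * Complex.I := by
  unfold xi s3
  have h : (2 * (Real.pi:ℂ) * Complex.I / 6) = (Real.pi/3 : ℝ) * Complex.I := by push_cast; ring
  rw [h, Complex.exp_mul_I]
  rw [← Complex.ofReal_cos, ← Complex.ofReal_sin, Real.cos_pi_div_three, Real.sin_pi_div_three]
  push_cast; ring

lemma hx : xi ^ 2 - xi + 1 = 0 := by
  rw [xi_eq]
  linear_combination (Complex.I^2/4) * hs3 + (3/4) * Complex.I_sq

lemma s3_ne : s3 ≠ 0 := by
  unfold s3
  exact_mod_cast Real.sqrt_ne_zero'.mpr (by norm_num)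

lemma h2s3_ne : (2:ℂ) + s3 ≠ 0 := by
  unfold s3
  have : ((2 + Real.sqrt 3 : ℝ) : ℂ) ≠ 0 := Complex.ofReal_ne_zero.mpr (by positivity)
  push_cast at this
  exact this

lemma hc0_ne : -(12 + 8*s3) ≠ (0:ℂ) := by
  unfold s3
  have : ((12 + 8*Real.sqrt 3 : ℝ) : ℂ) ≠ 0 := Complex.ofReal_ne_zero.mpr (by positivity)
  push_cast at this
  intro h
  exact this (by linear_combination -h)

lemma h84_ne : -((8:ℂ) + 4*s3) ≠ 0 := by
  unfold s3
  have : ((8 + 4*Real.sqrt 3 : ℝ) : ℂ) ≠ 0 := Complex.ofReal_ne_zero.mpr (by positivity)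
  push_cast at this
  intro h
  exact this (by linear_combination -h)

lemma hane : 4*xi - 2 ≠ 0 := by
  rw [xi_eq]
  intro h
  have h2 : s3 * Complex.I = 0 := by linear_combination h/2
  rcases mul_eq_zero.mp h2 with h'|h'
  · exact s3_ne h'
  · exact Complex.I_ne_zero h'

lemma hlamp_ne : 2*xi - 1 + 2*Complex.I ≠ 0 := by
  rw [xi_eq]
  intro h
  have h2 : (s3 + 2) * Complex.I = 0 := by linear_combination h
  rcases mul_eq_zero.mp h2 with h'|h'
  · exact h2s3_ne (by linear_combination h')
  · exact Complex.I_ne_zero h'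

lemma C_xi2 : (C (4*xi-2) : MvPolynomial (Fin 4) ℂ) = 4 * C xi - 2 := by
  rw [map_sub, map_mul, map_ofNat, map_ofNat]

lemma pderiv_two (i : Fin 4) : pderiv i (2 : MvPolynomial (Fin 4) ℂ) = 0 := by
  rw [← map_ofNat (C : ℂ →+* MvPolynomial (Fin 4) ℂ) 2]; exact pderiv_C

lemma pderiv_four (i : Fin 4) : pderiv i (4 : MvPolynomial (Fin 4) ℂ) = 0 := by
  rw [← map_ofNat (C : ℂ →+* MvPolynomial (Fin 4) ℂ) 4]; exact pderiv_C

lemma Jst_eq : Jst = (4 * X 0^3 + (8 * C xi - 4) * X 0 * X 1^2) * (X 0^5 - 5*X 0*X 1^4)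
    - ((8*C xi - 4) * X 0^2 * X 1 + 4*X 1^3) * (5*X 0^4*X 1 - X 1^5) := by
  unfold Jst Xst Yst
  rw [C_xi2]
  simp only [map_add, map_sub, map_mul, pderiv_mul, pderiv_pow, pderiv_C, pderiv_X_self,
    pderiv_X_of_ne (show (1:Fin 4) ≠ 0 by decide), pderiv_X_of_ne (show (0:Fin 4) ≠ 1 by decide),
    map_ofNat, pderiv_two, pderiv_four]
  ring

noncomputable def Gq (k : ℂ) : Polynomial (MvPolynomial (Fin 1) ℂ) :=
  Polynomial.X ^ 3 + Polynomial.C (MvPolynomial.C k * (X 0) ^ 2)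

lemma e2_g (k : ℂ) :
    MvPolynomial.finSuccEquiv ℂ 1 ((X 0 : MvPolynomial (Fin 2) ℂ) ^ 3 + C k * X 1 ^ 2) = Gq k := by
  have h1 : (X (1 : Fin 2) : MvPolynomial (Fin 2) ℂ) = X (Fin.succ 0) := rfl
  rw [Gq, map_add, map_mul, map_pow, map_pow, h1, finSuccEquiv_X_zero, finSuccEquiv_X_succ]
  have hC : MvPolynomial.finSuccEquiv ℂ 1 (C k) = Polynomial.C (C k) := by
    simp [finSuccEquiv_apply]
  rw [hC, ← Polynomial.C_pow, ← map_mul]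

lemma Gq_monic (k : ℂ) : (Gq k).Monic := by
  apply Polynomial.monic_X_pow_add
  exact lt_of_le_of_lt (Polynomial.degree_C_le) (by norm_num)

lemma Gq_deg (k : ℂ) : (Gq k).degree = 3 :=
  Polynomial.degree_X_pow_add_C (by norm_num) _

lemma vec_eq (α β : ℂ) : ![α, β] = (Fin.cons α (fun _ : Fin 1 => β) : Fin 2 → ℂ) := by
  funext i; fin_cases i <;> rfl

lemma bridge1 (α β : ℂ) (w : MvPolynomial (Fin 2) ℂ) :
    eval ![α, β] w
      = Polynomial.eval₂ (MvPolynomial.eval (fun _ : Fin 1 => β) : MvPolynomial (Fin 1) ℂ →+* ℂ)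
          α (MvPolynomial.finSuccEquiv ℂ 1 w) := by
  rw [vec_eq, eval_eq_eval_mv_eval', Polynomial.eval_map]

noncomputable def iota : MvPolynomial (Fin 1) ℂ ≃ₐ[ℂ] Polynomial ℂ :=
  (renameEquiv ℂ (Equiv.equivPUnit.{1,1} (Fin 1))).trans (pUnitAlgEquiv ℂ)

lemma bridge2 (u : ℂ) (ρ : MvPolynomial (Fin 1) ℂ) :
    eval (fun _ : Fin 1 => u) ρ = Polynomial.eval u (iota ρ) := by
  have h : (eval (fun _ : Fin 1 => u) : MvPolynomial (Fin 1) ℂ →+* ℂ)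
      = (Polynomial.evalRingHom u).comp (iota : MvPolynomial (Fin 1) ℂ →+* Polynomial ℂ) := by
    apply MvPolynomial.ringHom_ext
    · intro r; simp [iota]
    · intro i
      have hj : i = 0 := Subsingleton.elim _ _
      subst hj
      simp [iota]
  exact congrFun (congrArg (fun f : MvPolynomial (Fin 1) ℂ →+* ℂ => f.toFun) h) ρ

/-- Vanishing of a polynomial at all points of the parametrized cusp forces span membership. -/
lemma ker_param (c d : ℂ) (hc : c ≠ 0) (hd : d ≠ 0)
    (hcd : c^3 + (-24*xi+12) * d^2 = 0)
    (p : MvPolynomial (Fin 2) ℂ)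
    (hev0 : ∀ z : ℂ, eval ![c*z^4, d*z^6] p = 0) :
    p ∈ Ideal.span {(X 0 : MvPolynomial (Fin 2) ℂ)^3 + C (-24*xi+12) * X 1^2} := by
  set k : ℂ := -24*xi+12 with hk
  set r := MvPolynomial.finSuccEquiv ℂ 1 p %ₘ Gq k with hrdef
  set q := MvPolynomial.finSuccEquiv ℂ 1 p /ₘ Gq k with hqdef
  have hp : p = (MvPolynomial.finSuccEquiv ℂ 1).symm r
      + ((X 0 : MvPolynomial (Fin 2) ℂ)^3 + C k * X 1^2) * (MvPolynomial.finSuccEquiv ℂ 1).symm q := by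
    apply (MvPolynomial.finSuccEquiv ℂ 1).injective
    rw [map_add, map_mul, AlgEquiv.apply_symm_apply, AlgEquiv.apply_symm_apply, e2_g]
    exact (Polynomial.modByMonic_add_div (MvPolynomial.finSuccEquiv ℂ 1 p) (Gq k)).symm
  have hgz : ∀ z : ℂ, eval ![c*z^4, d*z^6] ((X 0 : MvPolynomial (Fin 2) ℂ)^3 + C k * X 1^2) = 0 := by
    intro z
    simp only [map_add, map_mul, map_pow, eval_X, eval_C, Matrix.cons_val_zero,
      Matrix.cons_val_one, Matrix.head_cons]
    linear_combination (z^12) * hcd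
  have hev : ∀ z : ℂ,
      Polynomial.eval₂ (MvPolynomial.eval (fun _ : Fin 1 => d*z^6) : MvPolynomial (Fin 1) ℂ →+* ℂ)
        (c*z^4) r = 0 := by
    intro z
    have h1 := hev0 z
    rw [hp, map_add, map_mul, hgz z, zero_mul, add_zero] at h1
    rw [bridge1] at h1
    rwa [AlgEquiv.apply_symm_apply] at h1
  have hr : r = 0 := by
    by_cases hr0 : r = 0
    · exact hr0
    have hdeg : r.degree < 3 := by
      rw [← Gq_deg k]; exact Polynomial.degree_modByMonic_lt _ (Gq_monic k)
    have hnat : r.natDegree < 3 := by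
      rwa [Polynomial.natDegree_lt_iff_degree_lt hr0, Nat.cast_ofNat]
    have hsum : ∀ z : ℂ,
        eval (fun _ : Fin 1 => d*z^6) (r.coeff 0)
          + eval (fun _ : Fin 1 => d*z^6) (r.coeff 1) * (c*z^4)
          + eval (fun _ : Fin 1 => d*z^6) (r.coeff 2) * (c*z^4)^2 = 0 := by
      intro z
      have h2 := hev z
      rw [Polynomial.eval₂_eq_sum_range' _ hnat] at h2
      simp only [Finset.sum_range_succ, Finset.sum_range_zero, zero_add, pow_zero, mul_one,
        pow_one] at h2
      linear_combination h2
    have hvan : ∀ z : ℂ, z ≠ 0 →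
        (eval (fun _ : Fin 1 => d*z^6) (r.coeff 0) = 0 ∧
         eval (fun _ : Fin 1 => d*z^6) (r.coeff 1) = 0 ∧
         eval (fun _ : Fin 1 => d*z^6) (r.coeff 2) = 0) := by
      intro z hz0
      have h0 := hsum z
      have h1 := hsum (xi*z)
      have h2 := hsum (xi^2*z)
      have e1 : d*(xi*z)^6 = d*z^6 := by
        linear_combination (d*z^6*(xi^3-1)*(xi+1)) * hx
      have e2 : d*(xi^2*z)^6 = d*z^6 := by
        linear_combination (d*z^6*(xi^6+1)*(xi^3-1)*(xi+1)) * hx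
      simp only [e1] at h1
      simp only [e2] at h2
      set A0 := eval (fun _ : Fin 1 => d*z^6) (r.coeff 0) with hA0
      set A1 := eval (fun _ : Fin 1 => d*z^6) (r.coeff 1) with hA1
      set A2 := eval (fun _ : Fin 1 => d*z^6) (r.coeff 2) with hA2
      have hcz : c * z^4 ≠ 0 := mul_ne_zero hc (pow_ne_zero _ hz0)
      refine ⟨?_, ?_, ?_⟩
      · linear_combination (1/3) * h0 + (1/3) * h1 + (1/3) * h2 + ((-1/3)*A1*c*z^4*xi^6 + (-1/3)*A1*c*z^4*xi^5 + (1/3)*A1*c*z^4*xi^3 + (-1/3)*A1*c*z^4*xi + (-1/3)*A1*c*z^4 + (-1/3)*A2*c^2*z^8*xi^14 + (-1/3)*A2*c^2*z^8*xi^13 + (1/3)*A2*c^2*z^8*xi^11 + (1/3)*A2*c^2*z^8*xi^10 + (-1/3)*A2*c^2*z^8*xi^8 + (-1/3)*A2*c^2*z^8*xi^7 + (-1/3)*A2*c^2*z^8*xi^6 + (1/3)*A2*c^2*z^8*xi^4 + (1/3)*A2*c^2*z^8*xi^3 + (-1/3)*A2*c^2*z^8*xi + (-1/3)*A2*c^2*z^8)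 * hx
      · have hB1 : A1 * (c*z^4) = 0 := by
          linear_combination (1/3) * h0 + (xi^2/3) * h1 + (-xi/3) * h2 + ((-1/3)*A0 + (1/3)*A1*c*z^4*xi^7 + (1/3)*A1*c*z^4*xi^6 + (-2/3)*A1*c*z^4*xi^4 + (-2/3)*A1*c*z^4*xi^3 + (2/3)*A1*c*z^4*xi + (2/3)*A1*c*z^4 + (1/3)*A2*c^2*z^8*xi^15 + (1/3)*A2*c^2*z^8*xi^14 + (-1/3)*A2*c^2*z^8*xi^12 + (-1/3)*A2*c^2*z^8*xi^11 + (1/3)*A2*c^2*z^8*xi^9 + (-1/3)*A2*c^2*z^8*xi^7 + (-1/3)*A2*c^2*z^8*xi^6 + (1/3)*A2*c^2*z^8*xi^4 + (1/3)*A2*c^2*z^8*xi^3 + (-1/3)*A2*c^2*z^8*xi + (-1/3)*A2*c^2*z^8) * hx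
        exact (mul_eq_zero.mp hB1).resolve_right hcz
      · have hB2 : A2 * (c*z^4)^2 = 0 := by
          linear_combination (1/3) * h0 + (-xi/3) * h1 + (xi^2/3) * h2 + ((-1/3)*A0 + (-1/3)*A1*c*z^4*xi^8 + (-1/3)*A1*c*z^4*xi^7 + (1/3)*A1*c*z^4*xi^5 + (1/3)*A1*c*z^4*xi^4 + (1/3)*A1*c*z^4*xi^3 + (-1/3)*A1*c*z^4*xi + (-1/3)*A1*c*z^4 + (-1/3)*A2*c^2*z^8*xi^16 + (-1/3)*A2*c^2*z^8*xi^15 + (1/3)*A2*c^2*z^8*xi^13 + (1/3)*A2*c^2*z^8*xi^12 + (-1/3)*A2*c^2*z^8*xi^10 + (-1/3)*A2*c^2*z^8*xi^9 + (2/3)*A2*c^2*z^8*xi^7 + (2/3)*A2*c^2*z^8*xi^6 + (-2/3)*A2*c^2*z^8*xi^4 + (-2/3)*A2*c^2*z^8*xi^3 + (2/3)*A2*c^2*z^8*xi + (2/3)*A2*c^2*z^8) * hx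
        exact (mul_eq_zero.mp hB2).resolve_right (pow_ne_zero _ hcz)
    have hkey : ∀ ρ : MvPolynomial (Fin 1) ℂ,
        (∀ z : ℂ, z ≠ 0 → eval (fun _ : Fin 1 => d*z^6) ρ = 0) → ρ = 0 := by
      intro ρ hρ
      have hι : iota ρ = 0 := by
        apply Polynomial.eq_zero_of_infinite_isRoot
        apply Set.Infinite.mono (s := {u : ℂ | u ≠ 0})
        · intro u hu
          obtain ⟨z, hz6⟩ := IsAlgClosed.exists_pow_nat_eq (u/d) (show 0 < 6 by norm_num)
          have hzne : z ≠ 0 := by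
            intro h0
            rw [h0] at hz6
            apply hu
            have : u / d = 0 := by rw [← hz6]; ring
            exact (div_eq_zero_iff.mp this).resolve_right hd
          have hdz : d * z^6 = u := by rw [hz6]; field_simp
          have hval := hρ z hzne
          simp only [hdz] at hval
          show (iota ρ).IsRoot u
          rw [Polynomial.IsRoot, ← bridge2]
          exact hval
        · have hin : {u : ℂ | u ≠ 0} = ({0}ᶜ : Set ℂ) := by ext u; simp
          rw [hin]
          exact (Set.finite_singleton (0:ℂ)).infinite_compl
      have := congrArg iota.symm hι
      rwa [AlgEquiv.symm_apply_apply, map_zero] at this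
    have h0 : r.coeff 0 = 0 := hkey _ (fun z hz' => (hvan z hz').1)
    have h1 : r.coeff 1 = 0 := hkey _ (fun z hz' => (hvan z hz').2.1)
    have h2 : r.coeff 2 = 0 := hkey _ (fun z hz' => (hvan z hz').2.2)
    refine Polynomial.ext fun n => ?_
    rcases n with _|_|_|n
    · simpa using h0
    · simpa using h1
    · simpa using h2
    · rw [Polynomial.coeff_eq_zero_of_degree_lt, Polynomial.coeff_zero]
      refine lt_of_lt_of_le hdeg ?_
      have : r.degree < 3 := hdeg
      exact_mod_cast Nat.cast_le.mpr (by omega : 3 ≤ n + 3)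
  rw [hp, hr, map_zero, zero_add]
  exact Ideal.mul_mem_right _ _ (Ideal.subset_span rfl)


/-- The branch locus of `f̃₄` is the cuspidal cubic `x³ + (−24ξ + 12)y² = 0`:
the image of the zero set of the Jacobian is this curve, and eliminating `s, t`
from the ideal `(J, x − X(s,t), y − Y(s,t))` yields the principal ideal
`(x³ + (−24ξ + 12)y²)`. -/
theorem stmt_19 :
    (f4map '' {p : ℂ × ℂ |
        (4 * p.1 ^ 3 + 2 * (4 * xi - 2) * p.1 * p.2 ^ 2) *
            (p.1 ^ 5 - 5 * p.1 * p.2 ^ 4) -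
          (2 * (4 * xi - 2) * p.1 ^ 2 * p.2 + 4 * p.2 ^ 3) *
            (5 * p.1 ^ 4 * p.2 - p.2 ^ 5) = 0}
      = {q : ℂ × ℂ | q.1 ^ 3 + (-24 * xi + 12) * q.2 ^ 2 = 0}) ∧
    Ideal.comap (MvPolynomial.rename (![2, 3] : Fin 2 → Fin 4)).toRingHom
        (Ideal.span {Jst, X 2 - Xst, X 3 - Yst})
      = Ideal.span {(X 0 : MvPolynomial (Fin 2) ℂ) ^ 3 + C (-24 * xi + 12) * X 1 ^ 2} := by
  constructor
  · -- Part 1 : the image equality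
    apply Set.eq_of_subset_of_subset
    · rintro _ ⟨⟨s, t⟩, hJ, rfl⟩
      simp only [Set.mem_setOf_eq] at hJ
      simp only [Set.mem_setOf_eq, f4map]
      linear_combination ((s^4 - (4*xi-2)*s^2*t^2 + t^4)/4) * hJ + (16*(s^4*t^8 + (4*xi-2)*s^6*t^6 + s^8*t^4)) * hx
    · rintro ⟨x, y⟩ hq
      simp only [Set.mem_setOf_eq] at hq
      -- choose a square root w' of x/(2(4ξ-2))
      obtain ⟨w', hw'⟩ := IsAlgClosed.exists_pow_nat_eq (x / (2*(4*xi-2))) (show 0 < 2 by norm_num)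
      have h2a : (2:ℂ)*(4*xi-2) ≠ 0 := mul_ne_zero two_ne_zero hane
      have hw : 2*(4*xi-2)*w'^2 = x := by
        rw [hw', mul_div_cancel₀ _ h2a]
      have hY2 : (-24*xi+12) * y^2 = -(2*(4*xi-2)*w'^2)^3 := by
        rw [hw]; linear_combination hq
      have h16 : (-24*xi+12) * y^2 = (-24*xi+12) * (16*Complex.I^2*w'^6) := by
        linear_combination hY2 + ((-512)*w'^6*xi + (256)*w'^6) * hx + ((384)*w'^6*xi + (-192)*w'^6) * Complex.I_sq
      have hm6 : (-24*xi+12 : ℂ) ≠ 0 := by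
        intro h; exact hane (by linear_combination -h/6)
      have hy2 : y^2 = 16*Complex.I^2*w'^6 := mul_left_cancel₀ hm6 h16
      have hfac : (y - 4*Complex.I*w'^3) * (y + 4*Complex.I*w'^3) = 0 := by
        linear_combination hy2
      obtain ⟨w, hwx, hwy⟩ : ∃ w : ℂ, 2*(4*xi-2)*w^2 = x ∧ y = 4*Complex.I*w^3 := by
        rcases mul_eq_zero.mp hfac with h | h
        · exact ⟨w', hw, by linear_combination h⟩
        · exact ⟨-w', by linear_combination hw, by linear_combination h⟩
      rcases eq_or_ne w 0 with hw0 | hw0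
      · subst hw0
        have hx0 : x = 0 := by linear_combination -hwx
        have hy0 : y = 0 := by linear_combination hwy
        subst hx0; subst hy0
        refine ⟨(0, 0), ?_, ?_⟩
        · show (4 * (0:ℂ)^3 + 2*(4*xi-2)*0*(0:ℂ)^2) * ((0:ℂ)^5 - 5*0*(0:ℂ)^4)
            - (2*(4*xi-2)*(0:ℂ)^2*0 + 4*(0:ℂ)^3) * (5*(0:ℂ)^4*0 - (0:ℂ)^5) = 0
          ring
        · show f4map (0, 0) = (0, 0)
          simp [f4map]
      · obtain ⟨s, hs4⟩ := IsAlgClosed.exists_pow_nat_eq ((2*xi - 1 + 2*Complex.I) * w^2)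
          (show 0 < 4 by norm_num)
        have hs0 : s ≠ 0 := by
          intro h0
          rw [h0] at hs4
          have : (2*xi - 1 + 2*Complex.I) * w^2 = 0 := by rw [← hs4]; ring
          rcases mul_eq_zero.mp this with h' | h'
          · exact hlamp_ne h'
          · exact hw0 (sq_eq_zero_iff.mp h')
        obtain ⟨t, hst⟩ : ∃ t : ℂ, s * t = w := ⟨w / s, by field_simp⟩
        have ht4 : t^4 = (2*xi - 1 - 2*Complex.I) * w^2 := by
          have h1 : (2*xi - 1 + 2*Complex.I)*w^2 * t^4
              = (2*xi - 1 + 2*Complex.I)*w^2 * ((2*xi - 1 - 2*Complex.I)*w^2) := by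
            linear_combination (-t^4) * hs4 + (s^3*t^3 + s^2*t^2*w + s*t*w^2 + w^3) * hst + ((-4)*w^4) * hx + ((4)*w^4) * Complex.I_sq
          exact mul_left_cancel₀ (mul_ne_zero hlamp_ne (pow_ne_zero 2 hw0)) h1
        refine ⟨(s, t), ?_, ?_⟩
        · show (4*s^3 + 2*(4*xi-2)*s*t^2) * (s^5 - 5*s*t^4)
            - (2*(4*xi-2)*s^2*t + 4*t^3) * (5*s^4*t - t^5) = 0
          have h8 : s^8 * ((4*s^3 + 2*(4*xi-2)*s*t^2) * (s^5 - 5*s*t^4)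
              - (2*(4*xi-2)*s^2*t + 4*t^3) * (5*s^4*t - t^5)) = 0 := by
            linear_combination ((-32)*s^13*t*xi + (16)*s^13*t + (-40)*s^11*t^3 + (-32)*s^9*t^5*xi + (16)*s^9*t^5 + (-64)*s^8*w^3*xi*Complex.I + (32)*s^8*w^3*Complex.I + (48)*s^8*w^3 + (4)*s^7*t^7 + (-80)*s^6*t^2*w^3*xi + (-80)*s^6*t^2*w^3*Complex.I + (40)*s^6*t^2*w^3 + (-32)*s^4*w^5*xi + (16)*s^4*w^5 + (4)*s^2*t^2*w^5 + (-320)*s*t*w^6*xi*Complex.I + (160)*s*t*w^6*Complex.I + (284)*s*t*w^6 + (-320)*w^7*xi*Complex.I + (160)*w^7*Complex.I + (284)*w^7) * hst + ((4)*s^12 + (-32)*s^9*t*w*xi + (16)*s^9*t*w + (8)*s^8*w^2*xi + (8)*s^8*w^2*Complex.I + (-4)*s^8*w^2 + (-40)*s^7*t^3*w + (-32)*s^5*t^5*w*xi + (16)*s^5*t^5*w + (-32)*s^4*w^4*xi*Complex.I + (16)*s^4*w^4*Complex.I + (20)*s^4*w^4 + (4)*s^3*t^7*w + (-80)*s^2*t^2*w^4*xi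 + (-80)*s^2*t^2*w^4*Complex.I + (40)*s^2*t^2*w^4 + (72)*w^6*xi + (88)*w^6*Complex.I + (-36)*w^6) * hs4 + ((-64)*s^5*t*w^3*xi^2 + (-64)*s^5*t*w^3*xi*Complex.I + (64)*s^5*t*w^3*xi + (32)*s^5*t*w^3*Complex.I + (-16)*s^5*t*w^3 + (8)*s^3*t^3*w^3*xi + (8)*s^3*t^3*w^3*Complex.I + (-4)*s^3*t^3*w^3) * ht4 + ((-64)*s^9*t*w^3 + (16)*s^8*w^4 + (-128)*s^5*t*w^5*xi + (64)*s^5*t*w^5 + (-64)*s^4*w^6*Complex.I + (16)*s^3*t^3*w^5 + (-160)*s^2*t^2*w^6 + (144)*w^8) * hx + ((16)*s^8*w^4 + (128)*s^5*t*w^5*xi + (-64)*s^5*t*w^5 + (-64)*s^4*w^6*xi + (32)*s^4*w^6 + (-16)*s^3*t^3*w^5 + (-160)*s^2*t^2*w^6 + (176)*w^8) * Complex.I_sq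
          exact (mul_eq_zero.mp h8).resolve_left (pow_ne_zero 8 hs0)
        · have hXc : s^4 + (4*xi-2)*s^2*t^2 + t^4 = x := by
            have h4 : s^4 * (s^4 + (4*xi-2)*s^2*t^2 + t^4) = s^4 * x := by
              linear_combination ((4)*s^5*t*xi + (-2)*s^5*t + s^3*t^3 + s^2*t^2*w + s*t*w^2 + (8)*w^3*xi*Complex.I + (-4)*w^3*Complex.I + (-5)*w^3) * hst + (s^4 + (4)*s*t*w*xi + (-2)*s*t*w + (2)*w^2*xi + (2)*w^2*Complex.I + (-1)*w^2 + (-1)*x) * hs4 + (-((-2)*w^2*xi + (-2)*w^2*Complex.I + w^2)) * hwx + ((8)*s*t*w^3 + (-12)*w^4) * hx + ((4)*w^4) * Complex.I_sq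
            exact mul_left_cancel₀ (pow_ne_zero 4 hs0) h4
          have hYc : s^5*t - s*t^5 = y := by
            have h4 : s^4 * (s^5*t - s*t^5) = s^4 * y := by
              linear_combination (s^8 + (-1)*s^4*t^4) * hst + (s^4*w + (-1)*t^4*w + (2)*w^3*xi + (2)*w^3*Complex.I + (-1)*w^3 + (-1)*y) * hs4 + ((-2)*w^3*xi + (-2)*w^3*Complex.I + w^3) * ht4 + ((-2)*w^2*xi + (-2)*w^2*Complex.I + w^2) * hwy
            exact mul_left_cancel₀ (pow_ne_zero 4 hs0) h4
          show f4map (s, t) = (x, y)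
          simp only [f4map]
          exact Prod.ext hXc hYc
  · -- Part 2 : the elimination ideal
    obtain ⟨mu, hmu⟩ := IsAlgClosed.exists_pow_nat_eq ((2+s3)*Complex.I) (show 0 < 2 by norm_num)
    have hmu0 : mu ≠ 0 := by
      intro h
      have h0 : (2+s3) * Complex.I = 0 := by rw [← hmu, h]; ring
      rcases mul_eq_zero.mp h0 with h' | h'
      exacts [h2s3_ne h', Complex.I_ne_zero h']
    apply le_antisymm
    · intro p hp
      rw [Ideal.mem_comap] at hp
      apply ker_param (-(12+8*s3)) (-(8+4*s3)*mu) hc0_ne (mul_ne_zero h84_ne hmu0)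
      · rw [xi_eq]
        linear_combination ((-192)*s3^3*Complex.I + (-768)*s3^2*Complex.I + (-768)*s3*Complex.I) * hmu + ((-192)*s3^4 + (-1152)*s3^3 + (-2304)*s3^2 + (-1536)*s3) * Complex.I_sq + ((192)*s3^2 + (640)*s3 + (576)) * hs3
      · intro z
        have hcomp : eval (![mu*z, z, -(12+8*s3)*z^4, (-(8+4*s3)*mu)*z^6])
              ((rename (![2, 3] : Fin 2 → Fin 4)) p)
            = eval ![(-(12+8*s3))*z^4, (-(8+4*s3)*mu)*z^6] p := by
          have hvec : (![mu*z, z, -(12+8*s3)*z^4, (-(8+4*s3)*mu)*z^6] ∘ (![2,3] : Fin 2 → Fin 4))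
              = ![(-(12+8*s3))*z^4, (-(8+4*s3)*mu)*z^6] := by
            funext i
            fin_cases i <;> simp
          rw [eval_rename, hvec]
        rw [← hcomp]
        have hker : Ideal.span {Jst, X 2 - Xst, X 3 - Yst}
            ≤ RingHom.ker (eval (![mu*z, z, -(12+8*s3)*z^4, (-(8+4*s3)*mu)*z^6])) := by
          rw [Ideal.span_le]
          rintro g' hg'
          simp only [Set.mem_insert_iff, Set.mem_singleton_iff] at hg'
          rcases hg' with rfl | rfl | rfl
          · rw [SetLike.mem_coe, RingHom.mem_ker, Jst_eq]
            simp only [map_add, map_sub, map_mul, map_pow, map_ofNat, eval_X, eval_C,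
              Matrix.cons_val_zero, Matrix.cons_val_one, Matrix.head_cons, Matrix.cons_val_two,
              Matrix.tail_cons, Matrix.cons_val_three]
            rw [xi_eq]
            linear_combination ((4)*mu^6*z^8 + (-12)*mu^4*z^8*s3*Complex.I + (8)*mu^4*z^8*Complex.I + (16)*mu^2*z^8*s3 + (-20)*mu^2*z^8 + (-4)*z^8*s3*Complex.I + (8)*z^8*Complex.I) * hmu + ((-12)*mu^4*z^8*s3^2 + (-16)*mu^4*z^8*s3 + (16)*mu^4*z^8 + (-4)*z^8*s3^2 + (16)*z^8) * Complex.I_sq + ((12)*mu^4*z^8 + (16)*mu^2*z^8*Complex.I + (4)*z^8) * hs3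
          · rw [SetLike.mem_coe, RingHom.mem_ker]
            unfold Xst
            simp only [map_add, map_sub, map_mul, map_pow, eval_X, eval_C,
              Matrix.cons_val_zero, Matrix.cons_val_one, Matrix.head_cons, Matrix.cons_val_two,
              Matrix.tail_cons]
            rw [xi_eq]
            linear_combination ((-1)*mu^2*z^4 + (-3)*z^4*s3*Complex.I + (-2)*z^4*Complex.I) * hmu + ((-3)*z^4*s3^2 + (-8)*z^4*s3 + (-4)*z^4) * Complex.I_sq + ((3)*z^4) * hs3
          · rw [SetLike.mem_coe, RingHom.mem_ker]
            unfold Yst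
            simp only [map_add, map_sub, map_mul, map_pow, eval_X, eval_C,
              Matrix.cons_val_zero, Matrix.cons_val_one, Matrix.head_cons,
              Matrix.cons_val_three, Matrix.tail_cons]
            linear_combination ((-1)*mu^3*z^6 + (-1)*mu*z^6*s3*Complex.I + (-2)*mu*z^6*Complex.I) * hmu + ((-1)*mu*z^6*s3^2 + (-4)*mu*z^6*s3 + (-4)*mu*z^6) * Complex.I_sq + (mu*z^6) * hs3
        exact hker hp
    · rw [Ideal.span_le]
      rintro g' hg'
      rw [Set.mem_singleton_iff] at hg'
      subst hg'
      rw [SetLike.mem_coe, Ideal.mem_comap]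
      have hre : (rename (![2, 3] : Fin 2 → Fin 4)).toRingHom
            ((X 0 : MvPolynomial (Fin 2) ℂ)^3 + C (-24*xi+12) * X 1^2)
          = (X 2 : MvPolynomial (Fin 4) ℂ)^3 + C (-24*xi+12) * (X 3)^2 := by
        simp [rename_X]
      rw [hre]
      have hCx : (C xi : MvPolynomial (Fin 4) ℂ)^2 - C xi + 1 = 0 := by
        have h0 : (C (xi^2 - xi + 1) : MvPolynomial (Fin 4) ℂ) = C 0 := by rw [hx]
        simpa [map_sub, map_add, map_pow, map_one, map_zero] using h0
      have hCk : (C (-24*xi+12) : MvPolynomial (Fin 4) ℂ) = -24 * C xi + 12 := by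
        rw [map_add, map_mul, map_neg, map_ofNat, map_ofNat]
      have key : (4 : MvPolynomial (Fin 4) ℂ) * ((X 2)^3 + C (-24*xi+12) * (X 3)^2)
          = (X 0^4 - (4*C xi - 2) * X 0^2*X 1^2 + X 1^4) * Jst
            + (4*((X 2)^2 + X 2 * Xst + Xst^2)) * (X 2 - Xst)
            + (4*((-24*C xi + 12) * (X 3 + Yst))) * (X 3 - Yst) := by
        rw [Jst_eq, hCk]
        unfold Xst Yst
        rw [C_xi2]
        linear_combination (64*(X 0^4*X 1^8 + (4*C xi - 2)*X 0^6*X 1^6 + X 0^8*X 1^4)) * hCx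
      have h4mem : (4 : MvPolynomial (Fin 4) ℂ) * ((X 2)^3 + C (-24*xi+12) * (X 3)^2)
          ∈ Ideal.span {Jst, X 2 - Xst, X 3 - Yst} := by
        rw [key]
        refine Ideal.add_mem _ (Ideal.add_mem _ ?_ ?_) ?_
        · exact Ideal.mul_mem_left _ _ (Ideal.subset_span (by simp))
        · exact Ideal.mul_mem_left _ _ (Ideal.subset_span (by simp))
        · exact Ideal.mul_mem_left _ _ (Ideal.subset_span (by simp))
      have hsplit : ((X 2 : MvPolynomial (Fin 4) ℂ)^3 + C (-24*xi+12) * (X 3)^2)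
          = C (4⁻¹ : ℂ) * ((4 : MvPolynomial (Fin 4) ℂ) * ((X 2)^3 + C (-24*xi+12) * (X 3)^2)) := by
        rw [← mul_assoc]
        have h14 : (C (4⁻¹ : ℂ) : MvPolynomial (Fin 4) ℂ) * 4 = 1 := by
          rw [show ((4 : MvPolynomial (Fin 4) ℂ)) = C (4:ℂ) from (map_ofNat _ _).symm, ← map_mul]
          norm_num
        rw [h14, one_mul]
      rw [hsplit]
      exact Ideal.mul_mem_left _ _ h4mem
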